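/- Let ν > 0, let G be a random variable with the Gamma distribution with shape 1 and rate 1/ν (i.e. exponential with mean ν), and let Z be a standard normal random variable independent of G. Then the law of X = √(2G)·Z is the Laplace (double exponential) distribution with density x ↦ (1/(2√ν))·e^{−|x|/√ν} with respect to Lebesgue measure on ℝ. -/

import Mathlib

open MeasureTheory ProbabilityTheory Real Set

/- If `G` is exponential with mean `ν` (i.e. `Gamma(shape 1, rate 1/ν)`) and `Z` is a
standard normal independent of `G`, then `X = √(2G) · Z` has the Laplace distribution
with density `x ↦ (1/(2√ν)) e^{-|x|/√ν}`. -/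

lemma lint_cov {s : Set ℝ} {f f' : ℝ → ℝ} (hs : MeasurableSet s)
    (hf' : ∀ x ∈ s, HasDerivWithinAt f (f' x) s x) (hf : Set.InjOn f s) (g : ℝ → ENNReal) :
    ∫⁻ x in f '' s, g x = ∫⁻ x in s, ENNReal.ofReal |f' x| * g (f x) := by
  simpa only [ContinuousLinearMap.det_toSpanSingleton] using
    lintegral_image_eq_lintegral_abs_det_fderiv_mul volume hs
      (fun x hx => (hf' x hx).hasFDerivWithinAt) hf g

lemma lint_gauss : ∫⁻ x : ℝ, ENNReal.ofReal (rexp (-x^2)) = ENNReal.ofReal (√π) := by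
  rw [← ofReal_integral_eq_lintegral_ofReal]
  · congr 1
    simpa using integral_gaussian 1
  · simpa using integrable_exp_neg_mul_sq one_pos
  · exact ae_of_all _ fun x => (exp_pos _).le

variable {α β : ℝ}

lemma phi_deriv (hβ : 0 ≤ β) : ∀ u ∈ Ioi (0:ℝ),
    HasDerivWithinAt (fun u => α*u - β/u) (α + β/u^2) (Ioi 0) u := by
  intro u hu
  have hu0 : u ≠ 0 := ne_of_gt hu
  have h := ((hasDerivAt_id u).const_mul α).sub ((hasDerivAt_const u β).div (hasDerivAt_id u) hu0)
  refine h.hasDerivWithinAt.congr_deriv ?_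
  simp only [id_eq]; ring

lemma phi_inj (hα : 0 < α) (hβ : 0 ≤ β) : Set.InjOn (fun u => α*u - β/u) (Ioi 0) := by
  have mono : StrictMonoOn (fun u => α*u - β/u) (Ioi 0) := by
    intro u hu w hw huw
    have h1 : α*u < α*w := by nlinarith [mem_Ioi.mp hu]
    have h2 : β/w ≤ β/u := by
      gcongr
    simp only [mem_Ioi] at *
    linarith
  exact mono.injOn

lemma phi_image (hα : 0 < α) (hβ : 0 < β) : (fun u => α*u - β/u) '' Ioi 0 = univ := by
  apply eq_univ_of_forall
  intro v
  set r := Real.sqrt (v^2 + 4*α*β) with hr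
  have hr2 : r^2 = v^2 + 4*α*β := Real.sq_sqrt (by positivity)
  have hrnn : 0 ≤ r := Real.sqrt_nonneg _
  have hrv : |v| < r := by nlinarith [sq_abs v, abs_nonneg v]
  have hu : 0 < (v + r)/(2*α) := by
    have := neg_abs_le v
    apply div_pos (by linarith) (by linarith)
  refine ⟨(v + r)/(2*α), hu, ?_⟩
  have hvr : 0 < v + r := by
    have := neg_abs_le v
    linarith
  show α * ((v + r)/(2*α)) - β/((v + r)/(2*α)) = v
  have hvr' : v + r ≠ 0 := ne_of_gt hvr
  field_simp
  linear_combination hr2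

lemma glasser_sum (hα : 0 < α) (hβ : 0 < β) :
    ∫⁻ u in Ioi (0:ℝ), ENNReal.ofReal ((α + β/u^2) * rexp (-(α*u - β/u)^2))
      = ENNReal.ofReal (√π) := by
  have h := lint_cov measurableSet_Ioi (phi_deriv hβ.le) (phi_inj hα hβ.le)
    (fun x => ENNReal.ofReal (rexp (-x^2)))
  rw [phi_image hα hβ, Measure.restrict_univ, lint_gauss] at h
  rw [h]
  refine setLIntegral_congr_fun measurableSet_Ioi (fun u hu => ?_)
  have hu0 : (0:ℝ) < u := hu
  have hpos : (0:ℝ) ≤ α + β/u^2 := by positivity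
  rw [abs_of_nonneg hpos, ← ENNReal.ofReal_mul hpos]

lemma inv_deriv (hα : 0 < α) (hβ : 0 < β) : ∀ u ∈ Ioi (0:ℝ),
    HasDerivWithinAt (fun u => β/(α*u)) (-(β/(α*u^2))) (Ioi 0) u := by
  intro u hu
  have hu0 : u ≠ 0 := ne_of_gt hu
  have h := (hasDerivAt_const u β).div ((hasDerivAt_id u).const_mul α)
    (by simp [hα.ne', hu0])
  refine h.hasDerivWithinAt.congr_deriv ?_
  simp only [id_eq]
  field_simp
  ring

lemma myinv_inj (hα : 0 < α) (hβ : 0 < β) : Set.InjOn (fun u => β/(α*u)) (Ioi 0) := by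
  intro u hu w hw h
  simp only [mem_Ioi] at hu hw
  have h1 : α*u ≠ 0 := by positivity
  have h2 : α*w ≠ 0 := by positivity
  field_simp at h
  exact Eq.symm h

lemma inv_image (hα : 0 < α) (hβ : 0 < β) : (fun u => β/(α*u)) '' Ioi 0 = Ioi (0:ℝ) := by
  apply Subset.antisymm
  · rintro w ⟨u, hu, rfl⟩
    have hu0 : (0:ℝ) < u := hu
    exact mem_Ioi.mpr (by positivity)
  · intro w hw
    have hw0 : (0:ℝ) < w := hw
    refine ⟨β/(α*w), mem_Ioi.mpr (by positivity), ?_⟩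
    field_simp

lemma glasser_refl (hα : 0 < α) (hβ : 0 < β) :
    ∫⁻ u in Ioi (0:ℝ), ENNReal.ofReal (rexp (-(α*u - β/u)^2))
      = ∫⁻ u in Ioi (0:ℝ), ENNReal.ofReal (β/(α*u^2) * rexp (-(α*u - β/u)^2)) := by
  have h := lint_cov measurableSet_Ioi (inv_deriv hα hβ) (myinv_inj hα hβ)
    (fun x => ENNReal.ofReal (rexp (-(α*x - β/x)^2)))
  rw [inv_image hα hβ] at h
  rw [h]
  refine setLIntegral_congr_fun measurableSet_Ioi (fun u hu => ?_)
  have hu0 : (0:ℝ) < u := hu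
  have hpos : (0:ℝ) ≤ β/(α*u^2) := by positivity
  rw [abs_neg, abs_of_nonneg hpos, ← ENNReal.ofReal_mul hpos]
  congr 3
  have e1 : α*(β/(α*u)) = β/u := by
    field_simp
  have e2 : β/(β/(α*u)) = α*u := by
    rw [div_div_eq_mul_div, mul_comm, mul_div_assoc, div_self hβ.ne', mul_one]
  rw [e1, e2]
  ring

lemma K_val (hα : 0 < α) (hβ : 0 ≤ β) :
    ∫⁻ u in Ioi (0:ℝ), ENNReal.ofReal (rexp (-(α*u - β/u)^2))
      = ENNReal.ofReal (√π/(2*α)) := by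
  rcases hβ.eq_or_lt with h0 | hβ'
  · have hcong : ∀ u ∈ Ioi (0:ℝ), ENNReal.ofReal (rexp (-(α*u - β/u)^2))
        = ENNReal.ofReal (rexp (-(α^2) * u^2)) := by
      intro u hu
      rw [← h0]
      congr 2
      ring
    rw [setLIntegral_congr_fun measurableSet_Ioi hcong,
      ← ofReal_integral_eq_lintegral_ofReal
        ((integrable_exp_neg_mul_sq (by positivity)).integrableOn)
        (ae_of_all _ fun u => (exp_pos _).le),
      integral_gaussian_Ioi]
    congr 1
    rw [Real.sqrt_div pi_pos.le, Real.sqrt_sq hα.le]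
    ring
  · have hmeas : Measurable fun u : ℝ =>
        ENNReal.ofReal α * ENNReal.ofReal (rexp (-(α*u - β/u)^2)) := by
      apply Measurable.const_mul
      apply Measurable.ennreal_ofReal
      apply Measurable.exp
      apply Measurable.neg
      exact ((measurable_id.const_mul α).sub (measurable_const.div measurable_id)).pow_const 2
    have hsum := glasser_sum hα hβ'
    have hsplit : ∀ u ∈ Ioi (0:ℝ), ENNReal.ofReal ((α + β/u^2) * rexp (-(α*u - β/u)^2))
        = ENNReal.ofReal α * ENNReal.ofReal (rexp (-(α*u - β/u)^2))
          + ENNReal.ofReal α * ENNReal.ofReal (β/(α*u^2) * rexp (-(α*u - β/u)^2)) := by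
      intro u hu
      have hu0 : (0:ℝ) < u := hu
      rw [← ENNReal.ofReal_mul hα.le, ← ENNReal.ofReal_mul hα.le,
        ← ENNReal.ofReal_add (by positivity) (by positivity)]
      congr 1
      field_simp
    rw [setLIntegral_congr_fun measurableSet_Ioi hsplit,
      lintegral_add_left hmeas, lintegral_const_mul' _ _ ENNReal.ofReal_ne_top,
      lintegral_const_mul' _ _ ENNReal.ofReal_ne_top, ← glasser_refl hα hβ'] at hsum
    have h2 : ENNReal.ofReal (2*α)
        * ∫⁻ u in Ioi (0:ℝ), ENNReal.ofReal (rexp (-(α*u - β/u)^2)) = ENNReal.ofReal √π := by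
      rw [show (2*α) = α + α by ring, ENNReal.ofReal_add hα.le hα.le, add_mul]
      exact hsum
    rw [ENNReal.ofReal_div_of_pos (by positivity)]
    exact (ENNReal.eq_div_iff (by simp [hα] : ENNReal.ofReal (2*α) ≠ 0)
      ENNReal.ofReal_ne_top).mpr h2

lemma sq_deriv : ∀ s ∈ Ioi (0:ℝ), HasDerivWithinAt (fun s : ℝ => s^2) (2*s) (Ioi 0) s := by
  intro s _
  simpa using (hasDerivAt_pow 2 s).hasDerivWithinAt

lemma sq_inj : Set.InjOn (fun s : ℝ => s^2) (Ioi 0) := by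
  intro u hu w hw h
  simp only [mem_Ioi] at hu hw
  have h' : u^2 = w^2 := h
  nlinarith

lemma sq_image : (fun s : ℝ => s^2) '' Ioi 0 = Ioi (0:ℝ) := by
  apply Subset.antisymm
  · rintro w ⟨u, hu, rfl⟩
    have : (0:ℝ) < u := hu
    exact mem_Ioi.mpr (by positivity)
  · intro w hw
    have hw0 : (0:ℝ) < w := hw
    exact ⟨√w, mem_Ioi.mpr (Real.sqrt_pos.mpr hw0), Real.sq_sqrt hw0.le⟩

lemma key_int {ν : ℝ} (hν : 0 < ν) (x : ℝ) :
    ∫⁻ g in Ioi (0:ℝ), ENNReal.ofReal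
        ((1/ν * rexp (-(g/ν))) * ((√(2*π*(2*g)))⁻¹ * rexp (-x^2/(2*(2*g)))))
      = ENNReal.ofReal (1/(2*√ν) * rexp (-|x|/√ν)) := by
  have hsν : √ν ^ 2 = ν := Real.sq_sqrt hν.le
  have hsνpos : 0 < √ν := Real.sqrt_pos.mpr hν
  have hsπ : √π ^ 2 = π := Real.sq_sqrt pi_pos.le
  have hsπpos : 0 < √π := Real.sqrt_pos.mpr pi_pos
  have h := lint_cov measurableSet_Ioi sq_deriv sq_inj (fun g => ENNReal.ofReal
    ((1/ν * rexp (-(g/ν))) * ((√(2*π*(2*g)))⁻¹ * rexp (-x^2/(2*(2*g))))))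
  rw [sq_image] at h
  rw [h]
  have hcong : ∀ s ∈ Ioi (0:ℝ),
      ENNReal.ofReal |2*s| * ENNReal.ofReal
        ((1/ν * rexp (-(s^2/ν))) * ((√(2*π*(2*s^2)))⁻¹ * rexp (-x^2/(2*(2*s^2)))))
      = ENNReal.ofReal (rexp (-|x|/√ν) / (ν*√π))
          * ENNReal.ofReal (rexp (-((√ν)⁻¹*s - (|x|/2)/s)^2)) := by
    intro s hs
    have hs0 : (0:ℝ) < s := hs
    rw [← ENNReal.ofReal_mul (abs_nonneg _), ← ENNReal.ofReal_mul (by positivity)]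
    congr 1
    have hsqrt : √(2*π*(2*s^2)) = 2*√π*s := by
      rw [show 2*π*(2*s^2) = (2*√π*s)^2 by rw [mul_pow, mul_pow]; rw [hsπ]; ring]
      exact Real.sqrt_sq (by positivity)
    have hexp : -(s^2/ν) + -x^2/(2*(2*s^2))
        = -((√ν)⁻¹*s - (|x|/2)/s)^2 + -(|x|/√ν) := by
      have hsx : |x| ^ 2 = x^2 := sq_abs x
      field_simp
      ring_nf
      linear_combination (-4*s^4) * hsν + (√ν^2*ν) * hsx
    rw [abs_of_nonneg (by positivity : (0:ℝ) ≤ 2*s), hsqrt]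
    have expand : 2*s * ((1/ν * rexp (-(s^2/ν))) * ((2*√π*s)⁻¹ * rexp (-x^2/(2*(2*s^2)))))
        = (1/(ν*√π)) * (rexp (-(s^2/ν)) * rexp (-x^2/(2*(2*s^2)))) := by
      field_simp
    rw [expand, ← Real.exp_add, hexp, Real.exp_add]
    ring
  rw [setLIntegral_congr_fun measurableSet_Ioi hcong,
    lintegral_const_mul' _ _ ENNReal.ofReal_ne_top,
    K_val (by positivity) (by positivity),
    ← ENNReal.ofReal_mul (by positivity)]
  congr 1
  rw [div_mul_eq_mul_div, div_mul_eq_mul_div, eq_div_iff (by positivity)]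
  field_simp
  linear_combination hsν


lemma gauss_slice {g : ℝ} {s : Set ℝ} (hs : MeasurableSet s) :
    (gaussianReal 0 1) ((fun z => Real.sqrt (2*g) * z) ⁻¹' s)
      = gaussianReal 0 ((2*g).toNNReal) s := by
  have h0 : ((fun z => Real.sqrt (2*g) * z) ⁻¹' s) = ((Real.sqrt (2*g) * ·) ⁻¹' s) := rfl
  rw [h0, ← Measure.map_apply (measurable_const_mul _) hs, gaussianReal_map_const_mul]
  have h1 : Real.sqrt (2*g) * 0 = 0 := mul_zero _
  have h2 : (⟨Real.sqrt (2*g)^2, sq_nonneg _⟩ : NNReal) * 1 = (2*g).toNNReal := by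
    ext
    simp only [NNReal.coe_mul, NNReal.coe_mk, NNReal.coe_one, mul_one, Real.coe_toNNReal']
    rcases le_or_gt 0 (2*g) with h | h
    · rw [Real.sq_sqrt h]
      exact (Real.coe_toNNReal _ h).symm
    · rw [Real.sqrt_eq_zero_of_nonpos h.le, Real.toNNReal_of_nonpos h.le]
      norm_num
  rw [h1]; exact congrArg (fun v : NNReal => gaussianReal 0 v s) h2

lemma gammaPDF_pos_eq {ν g : ℝ} (hν : 0 < ν) (hg : 0 < g) :
    gammaPDF 1 (1/ν) g = ENNReal.ofReal (1/ν * rexp (-(g/ν))) := by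
  rw [gammaPDF_of_nonneg hg.le]
  congr 1
  rw [Real.rpow_one, Real.Gamma_one, sub_self, Real.rpow_zero]
  rw [show 1/ν * g = g/ν by ring]
  ring

lemma gaussPDF_pos_eq {g : ℝ} (hg : 0 < g) (x : ℝ) :
    gaussianPDF 0 ((2*g).toNNReal) x
      = ENNReal.ofReal ((√(2*π*(2*g)))⁻¹ * rexp (-x^2/(2*(2*g)))) := by
  have h2g : (0:ℝ) ≤ 2*g := by linarith
  rw [gaussianPDF, gaussianPDFReal]
  rw [Real.coe_toNNReal _ h2g, sub_zero]

lemma pointwise_density {ν : ℝ} (hν : 0 < ν) (x : ℝ) :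
    ∫⁻ g : ℝ, gammaPDF 1 (1/ν) g * gaussianPDF 0 ((2*g).toNNReal) x
      = ENNReal.ofReal (1/(2*√ν) * rexp (-|x|/√ν)) := by
  rw [← lintegral_add_compl _ (measurableSet_Ioi (a := (0:ℝ))), compl_Ioi]
  have hIic : ∫⁻ g in Iic (0:ℝ), gammaPDF 1 (1/ν) g * gaussianPDF 0 ((2*g).toNNReal) x = 0 := by
    rw [setLIntegral_congr Iio_ae_eq_Iic.symm,
      setLIntegral_congr_fun measurableSet_Iio
        (fun g (hg : g < 0) => by rw [gammaPDF_of_neg hg, zero_mul]),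
      lintegral_zero]
  rw [hIic, add_zero,
    setLIntegral_congr_fun measurableSet_Ioi (fun g (hg : 0 < g) => by
      rw [gammaPDF_pos_eq hν hg, gaussPDF_pos_eq hg x,
        ← ENNReal.ofReal_mul (by positivity)])]
  exact key_int hν x

theorem law_sqrt_two_exponential_mul_gaussian_eq_laplace
    {Ω : Type*} [MeasurableSpace Ω] (P : Measure Ω) [IsProbabilityMeasure P]
    (ν : ℝ) (hν : 0 < ν)
    (G Z : Ω → ℝ) (hGmeas : Measurable G) (hZmeas : Measurable Z)
    (hG : Measure.map G P = gammaMeasure 1 (1 / ν))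
    (hZ : Measure.map Z P = gaussianReal 0 1)
    (hindep : IndepFun G Z P) :
    Measure.map (fun ω => Real.sqrt (2 * G ω) * Z ω) P
      = volume.withDensity fun x : ℝ =>
          ENNReal.ofReal ((1 / (2 * Real.sqrt ν)) * Real.exp (-|x| / Real.sqrt ν)) := by
  have hf : Measurable fun p : ℝ × ℝ => Real.sqrt (2 * p.1) * p.2 :=
    (measurable_fst.const_mul 2).sqrt.mul measurable_snd
  have hmap : Measure.map (fun ω => (G ω, Z ω)) P
      = (gammaMeasure 1 (1/ν)).prod (gaussianReal 0 1) := by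
    rw [← hG, ← hZ]
    exact (indepFun_iff_map_prod_eq_prod_map_map hGmeas.aemeasurable hZmeas.aemeasurable).mp hindep
  have hX : Measure.map (fun ω => Real.sqrt (2 * G ω) * Z ω) P
      = Measure.map (fun p : ℝ × ℝ => Real.sqrt (2*p.1) * p.2)
          ((gammaMeasure 1 (1/ν)).prod (gaussianReal 0 1)) := by
    rw [← hmap, Measure.map_map hf (hGmeas.prodMk hZmeas)]
    rfl
  rw [hX]
  ext s hs
  rw [Measure.map_apply hf hs, Measure.prod_apply (hf hs), withDensity_apply _ hs]
  have hslice : ∀ g : ℝ, (Prod.mk g ⁻¹' ((fun p : ℝ×ℝ => Real.sqrt (2*p.1)*p.2) ⁻¹' s))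
      = (fun z => Real.sqrt (2*g) * z) ⁻¹' s := fun g => rfl
  simp_rw [hslice, gauss_slice hs]
  have hgm : Measurable (gammaPDF 1 (1/ν)) := (measurable_gammaPDFReal 1 (1/ν)).ennreal_ofReal
  have hgfin : ∀ᵐ g : ℝ, gammaPDF 1 (1/ν) g < ⊤ :=
    ae_of_all _ fun g => by rw [gammaPDF_eq]; exact ENNReal.ofReal_lt_top
  rw [gammaMeasure, lintegral_withDensity_eq_lintegral_mul_non_measurable _ hgm hgfin]
  have hae : ∀ᵐ g : ℝ, (gammaPDF 1 (1/ν) * fun g : ℝ => gaussianReal 0 ((2*g).toNNReal) s) g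
      = ∫⁻ x in s, gammaPDF 1 (1/ν) g * gaussianPDF 0 ((2*g).toNNReal) x := by
    filter_upwards [compl_mem_ae_iff.mpr (Real.volume_singleton (a := (0:ℝ)))] with g hg
    simp only [Pi.mul_apply]
    have hg0 : g ≠ 0 := fun h => hg (by simp [h])
    rcases hg0.lt_or_gt with hneg | hpos
    · rw [gammaPDF_of_neg hneg]
      simp
    · have hv : ((2*g).toNNReal) ≠ 0 := by
        simp only [ne_eq, Real.toNNReal_eq_zero, not_le]
        linarith
      rw [gaussianReal_of_var_ne_zero _ hv, withDensity_apply _ hs,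
        lintegral_const_mul' _ _ (by rw [gammaPDF_eq]; exact ENNReal.ofReal_ne_top)]
  rw [lintegral_congr_ae hae]
  have hFmeas : Measurable fun p : ℝ × ℝ =>
      gammaPDF 1 (1/ν) p.1 * gaussianPDF 0 ((2*p.1).toNNReal) p.2 := by
    apply Measurable.fun_mul
    · exact ((measurable_gammaPDFReal 1 (1/ν)).ennreal_ofReal).comp measurable_fst
    · apply Measurable.ennreal_ofReal
      show Measurable fun p : ℝ×ℝ =>
        (√(2*π*(((2*p.1).toNNReal : ℝ))))⁻¹ * rexp (-(p.2 - 0)^2/(2*((2*p.1).toNNReal:ℝ)))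
      have hm : Measurable fun p : ℝ×ℝ => ((2*p.1).toNNReal : ℝ) :=
        measurable_coe_nnreal_real.comp ((measurable_fst.const_mul 2).real_toNNReal)
      exact ((hm.const_mul (2*π)).sqrt.inv).mul
        ((((measurable_snd.sub measurable_const).pow_const 2).neg.div
          (hm.const_mul 2)).exp)
  rw [lintegral_lintegral_swap hFmeas.aemeasurable]
  refine setLIntegral_congr_fun hs (fun x _ => ?_)
  exact pointwise_density hν x
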